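/- Homotopy invariance of iterated integrals: let U ⊆ ℂ be a simply connected open set, let f₁, …, f_n : U → ℂ be holomorphic, and let H : [0,1] × [0,1] → U be a C¹ map such that H(s,0) = p and H(s,1) = q for all s ∈ [0,1] (a homotopy of paths fixing the endpoints). For each s let γ_s := H(s,·). Then the function s ↦ ∫_{γ_s} f₁ dz ∘ ⋯ ∘ f_n dz is constant on [0,1]. -/

import Mathlib

open MeasureTheory

/-- The simplex `{0 ≤ t 1 ≤ ⋯ ≤ t k ≤ 1}` in `[0,1]^k`. -/
def orderedSimplex (k : ℕ) : Set (Fin k → ℝ) :=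
  {t | (∀ i, t i ∈ Set.Icc (0 : ℝ) 1) ∧ ∀ i j : Fin k, i ≤ j → t i ≤ t j}

/-- The iterated integral `∫_γ f₁ dz ∘ ⋯ ∘ f_n dz
  := ∫_{0 ≤ t₁ ≤ ⋯ ≤ t_n ≤ 1} ∏ i, f_i (γ (t_i)) γ'(t_i) dt`. -/
noncomputable def iteratedPathIntegral (n : ℕ) (γ : ℝ → ℂ) (f : Fin n → ℂ → ℂ) : ℂ :=
  ∫ t in orderedSimplex n, ∏ i, f i (γ (t i)) * deriv γ (t i)

namespace IterHomotopyAux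

open Set intervalIntegral

/-- clamp to `[0,1]`. -/
noncomputable def cl (x : ℝ) : ℝ := max 0 (min x 1)

lemma cl_mem (x : ℝ) : cl x ∈ Icc (0:ℝ) 1 := by
  constructor
  · exact le_max_left _ _
  · simp only [cl, max_le_iff]
    exact ⟨zero_le_one, min_le_right _ _⟩

lemma cl_of_mem {x : ℝ} (h : x ∈ Icc (0:ℝ) 1) : cl x = x := by
  simp only [cl, min_eq_left h.2, max_eq_right h.1]

lemma cl_zero : cl 0 = 0 := cl_of_mem ⟨le_refl _, zero_le_one⟩
lemma cl_one : cl 1 = 1 := cl_of_mem ⟨zero_le_one, le_refl _⟩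

lemma continuous_cl : Continuous cl :=
  continuous_const.max (continuous_id.min continuous_const)

lemma cl_eventuallyEq {x : ℝ} (h : x ∈ Ioo (0:ℝ) 1) :
    (fun y => cl y) =ᶠ[nhds x] fun y => y := by
  filter_upwards [Ioo_mem_nhds h.1 h.2] with y hy
  exact cl_of_mem ⟨hy.1.le, hy.2.le⟩

/-- Truncated ordered simplex. -/
def simplexT (k : ℕ) (T : ℝ) : Set (Fin k → ℝ) :=
  {t | (∀ i, t i ∈ Icc (0:ℝ) T) ∧ ∀ i j : Fin k, i ≤ j → t i ≤ t j}

lemma orderedSimplex_eq (k : ℕ) : orderedSimplex k = simplexT k 1 := rfl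

lemma isClosed_simplexT (k : ℕ) (T : ℝ) : IsClosed (simplexT k T) := by
  have h1 : IsClosed {t : Fin k → ℝ | ∀ i, t i ∈ Icc (0:ℝ) T} := by
    rw [show {t : Fin k → ℝ | ∀ i, t i ∈ Icc (0:ℝ) T} = ⋂ i, (fun t => t i) ⁻¹' Icc (0:ℝ) T
      from by ext t; simp]
    exact isClosed_iInter fun i => isClosed_Icc.preimage (continuous_apply i)
  have h2 : IsClosed {t : Fin k → ℝ | ∀ i j : Fin k, i ≤ j → t i ≤ t j} := by
    rw [show {t : Fin k → ℝ | ∀ i j : Fin k, i ≤ j → t i ≤ t j}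
        = ⋂ (i) (j) (_ : i ≤ j), {t : Fin k → ℝ | t i ≤ t j} from by ext t; simp]
    exact isClosed_iInter fun i => isClosed_iInter fun j => isClosed_iInter fun _ =>
      isClosed_le (continuous_apply i) (continuous_apply j)
  exact h1.inter h2

lemma isCompact_simplexT (k : ℕ) (T : ℝ) : IsCompact (simplexT k T) := by
  refine IsCompact.of_isClosed_subset
    (isCompact_univ_pi fun _ : Fin k => isCompact_Icc (a := (0:ℝ)) (b := T))
    (isClosed_simplexT k T) ?_
  intro t ht i _
  exact ht.1 i

lemma measurableSet_simplexT (k : ℕ) (T : ℝ) : MeasurableSet (simplexT k T) :=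
  (isClosed_simplexT k T).measurableSet

/-- The iterated-primitive recursion. -/
noncomputable def Frec (g : ℕ → ℝ → ℂ) : ℕ → ℝ → ℂ
  | 0 => fun _ => (1:ℂ)
  | (k+1) => fun t => ∫ u in (0:ℝ)..t, g k u * Frec g k u

lemma Frec_continuous {g : ℕ → ℝ → ℂ} (hg : ∀ i, Continuous (g i)) (k : ℕ) :
    Continuous (Frec g k) := by
  induction k with
  | zero => exact continuous_const
  | succ k ih =>
    show Continuous fun t => ∫ u in (0:ℝ)..t, g k u * Frec g k u
    exact intervalIntegral.continuous_primitive
      (fun a b => ((hg k).mul ih).intervalIntegrable a b) 0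

lemma snoc_mem_simplexT {k : ℕ} {T b : ℝ} {w : Fin k → ℝ} :
    Fin.snoc w b ∈ simplexT (k+1) T ↔ b ∈ Icc (0:ℝ) T ∧ w ∈ simplexT k b := by
  constructor
  · rintro ⟨h1, h2⟩
    have hb : b ∈ Icc (0:ℝ) T := by simpa using h1 (Fin.last k)
    refine ⟨hb, fun i => ⟨?_, ?_⟩, fun i j hij => ?_⟩
    · have := (h1 i.castSucc).1
      simpa using this
    · have := h2 i.castSucc (Fin.last k) (Fin.le_last _)
      simpa using this
    · have := h2 i.castSucc j.castSucc (by simpa using hij)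
      simpa using this
  · rintro ⟨hb, hw1, hw2⟩
    constructor
    · intro l
      refine Fin.lastCases ?_ (fun i => ?_) l
      · simpa using hb
      · simp only [Fin.snoc_castSucc]
        exact ⟨(hw1 i).1, le_trans (hw1 i).2 hb.2⟩
    · intro i j hij
      refine Fin.lastCases ?_ (fun j' hij => ?_) j hij
      · intro _
        refine Fin.lastCases ?_ (fun i' => ?_) i
        · simp
        · simp only [Fin.snoc_castSucc, Fin.snoc_last]
          exact (hw1 i').2
      · refine Fin.lastCases ?_ (fun i' hij' => ?_) i hij
        · intro h
          exact absurd h (not_le.2 (Fin.castSucc_lt_last j'))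
        · simp only [Fin.snoc_castSucc]
          exact hw2 i' j' (by simpa using hij')

lemma integral_simplexT {g : ℕ → ℝ → ℂ} (hg : ∀ i, Continuous (g i)) (k : ℕ) :
    ∀ (T : ℝ), 0 ≤ T →
      (∫ t in simplexT k T, ∏ i : Fin k, g (i : ℕ) (t i)) = Frec g k T := by
  induction k with
  | zero =>
    intro T _
    have huniv : simplexT 0 T = univ :=
      eq_univ_iff_forall.2 (fun t => ⟨fun i => i.elim0, fun i => i.elim0⟩)
    rw [huniv, Measure.restrict_univ]
    simp only [Finset.univ_eq_empty, Finset.prod_empty]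
    rw [MeasureTheory.integral_const]
    show (volume (univ : Set (Fin 0 → ℝ))).toReal • (1:ℂ) = Frec g 0 T
    rw [volume_pi, Measure.pi_univ]
    simp [Frec]
  | succ k ih =>
    intro T hT
    set Φ : (Fin (k+1) → ℝ) → ℂ := fun t => ∏ i : Fin (k+1), g (i:ℕ) (t i) with hΦ
    have hΦc : Continuous Φ := by
      apply continuous_finset_prod
      exact fun i _ => (hg (i:ℕ)).comp (continuous_apply i)
    have hmeas := measurableSet_simplexT (k+1) T
    have hint : Integrable (Set.indicator (simplexT (k+1) T) Φ) := by
      rw [integrable_indicator_iff hmeas]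
      exact hΦc.continuousOn.integrableOn_compact (isCompact_simplexT _ _)
    set e := MeasurableEquiv.piFinSuccAbove (fun _ : Fin (k+1) => ℝ) (Fin.last k) with he
    have hmp : MeasurePreserving e := volume_preserving_piFinSuccAbove (fun _ => ℝ) (Fin.last k)
    have hsymm : ∀ y : ℝ × (Fin k → ℝ), e.symm y = Fin.snoc y.2 y.1 := by
      intro y
      show (Fin.insertNthEquiv (fun _ => ℝ) (Fin.last k)) y = _
      simp [Fin.insertNthEquiv, Fin.insertNth_last']
    have h1 : (∫ t in simplexT (k+1) T, Φ t)
        = ∫ y : ℝ × (Fin k → ℝ), Set.indicator (simplexT (k+1) T) Φ (Fin.snoc y.2 y.1) := by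
      rw [← MeasureTheory.integral_indicator hmeas]
      rw [← (hmp.symm e).integral_comp e.symm.measurableEmbedding
        (Set.indicator (simplexT (k+1) T) Φ)]
      exact integral_congr_ae (Filter.Eventually.of_forall fun y => by
        simp only []; rw [hsymm y])
    have hint2 : Integrable (fun y : ℝ × (Fin k → ℝ) =>
        Set.indicator (simplexT (k+1) T) Φ (Fin.snoc y.2 y.1)) := by
      have := ((hmp.symm e).integrable_comp_emb e.symm.measurableEmbedding).2 hint
      apply this.congr
      exact Filter.Eventually.of_forall fun y => by
        show Set.indicator _ Φ (e.symm y) = _; rw [hsymm y]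
    have key : ∀ b : ℝ, (∫ w : Fin k → ℝ, Set.indicator (simplexT (k+1) T) Φ (Fin.snoc w b))
        = Set.indicator (Icc (0:ℝ) T) (fun b => g k b * Frec g k b) b := by
      intro b
      by_cases hb : b ∈ Icc (0:ℝ) T
      · rw [Set.indicator_of_mem hb]
        have hptw : ∀ w : Fin k → ℝ, Set.indicator (simplexT (k+1) T) Φ (Fin.snoc w b)
            = g k b * Set.indicator (simplexT k b) (fun w => ∏ i : Fin k, g (i:ℕ) (w i)) w := by
          intro w
          by_cases hw : w ∈ simplexT k b
          · rw [Set.indicator_of_mem (snoc_mem_simplexT.2 ⟨hb, hw⟩), Set.indicator_of_mem hw]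
            have hrfl : Φ (Fin.snoc w b)
                = ∏ i : Fin (k+1), g (i:ℕ) ((Fin.snoc w b : Fin (k+1) → ℝ) i) := rfl
            rw [hrfl, Fin.prod_univ_castSucc]
            simp only [Fin.snoc_castSucc, Fin.snoc_last, Fin.coe_castSucc, Fin.val_last]
            ring
          · rw [Set.indicator_of_notMem hw, Set.indicator_of_notMem, mul_zero]
            exact fun hc => hw (snoc_mem_simplexT.1 hc).2
        calc (∫ w : Fin k → ℝ, Set.indicator (simplexT (k+1) T) Φ (Fin.snoc w b))
            = ∫ w : Fin k → ℝ, g k b *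
                Set.indicator (simplexT k b) (fun w => ∏ i : Fin k, g (i:ℕ) (w i)) w :=
              integral_congr_ae (Filter.Eventually.of_forall hptw)
          _ = g k b * ∫ w : Fin k → ℝ,
                Set.indicator (simplexT k b) (fun w => ∏ i : Fin k, g (i:ℕ) (w i)) w :=
              MeasureTheory.integral_const_mul _ _
          _ = g k b * Frec g k b := by
              rw [MeasureTheory.integral_indicator (measurableSet_simplexT k b), ih b hb.1]
      · rw [Set.indicator_of_notMem hb]
        have : ∀ w : Fin k → ℝ, Set.indicator (simplexT (k+1) T) Φ (Fin.snoc w b) = 0 :=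
          fun w => Set.indicator_of_notMem
            (fun hc => hb (snoc_mem_simplexT.1 hc).1) _
        simp [this]
    rw [h1, Measure.volume_eq_prod, MeasureTheory.integral_prod _ ?hi]
    case hi =>
      rw [← Measure.volume_eq_prod]; exact hint2
    calc (∫ b : ℝ, ∫ w : Fin k → ℝ, Set.indicator (simplexT (k+1) T) Φ (Fin.snoc w b))
        = ∫ b : ℝ, Set.indicator (Icc (0:ℝ) T) (fun b => g k b * Frec g k b) b :=
          integral_congr_ae (Filter.Eventually.of_forall key)
      _ = ∫ b in Icc (0:ℝ) T, g k b * Frec g k b :=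
          MeasureTheory.integral_indicator measurableSet_Icc
      _ = ∫ b in Ioc (0:ℝ) T, g k b * Frec g k b := MeasureTheory.integral_Icc_eq_integral_Ioc
      _ = Frec g (k+1) T := by
          show _ = ∫ u in (0:ℝ)..T, g k u * Frec g k u
          rw [intervalIntegral.integral_of_le hT]

lemma ipi_eq {n : ℕ} (c : ℝ → ℂ) (f : Fin n → ℂ → ℂ) (g : ℕ → ℝ → ℂ)
    (hg : ∀ i, Continuous (g i))
    (heq : ∀ t ∈ Ioo (0:ℝ) 1, ∀ i : Fin n, f i (c t) * deriv c t = g (i:ℕ) t) :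
    iteratedPathIntegral n c f = Frec g n 1 := by
  rw [iteratedPathIntegral, orderedSimplex_eq, ← integral_simplexT hg n 1 zero_le_one]
  apply setIntegral_congr_ae (measurableSet_simplexT n 1)
  have hae : ∀ᵐ t : Fin n → ℝ, ∀ i : Fin n, t i ≠ 0 ∧ t i ≠ 1 := by
    rw [MeasureTheory.ae_all_iff]
    intro i
    have h0 : volume {t : Fin n → ℝ | t i = 0} = 0 := by
      rw [volume_pi]; exact Measure.pi_hyperplane _ i 0
    have h1' : volume {t : Fin n → ℝ | t i = 1} = 0 := by
      rw [volume_pi]; exact Measure.pi_hyperplane _ i 1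
    have hu : volume ({t : Fin n → ℝ | t i = 0} ∪ {t | t i = 1}) = 0 :=
      measure_union_null h0 h1'
    filter_upwards [measure_eq_zero_iff_ae_notMem.1 hu] with t ht
    exact ⟨fun h => ht (Or.inl h), fun h => ht (Or.inr h)⟩
  filter_upwards [hae] with t ht hmem
  refine Finset.prod_congr rfl fun i _ => ?_
  exact heq (t i)
    ⟨lt_of_le_of_ne (hmem.1 i).1 (Ne.symm (ht i).1), lt_of_le_of_ne (hmem.1 i).2 (ht i).2⟩ i

lemma hasDerivAt_comp_real {F : ℂ → ℂ} {c : ℂ} {g : ℝ → ℂ} {g' : ℂ} {x : ℝ}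
    (hF : HasDerivAt F c (g x)) (hg : HasDerivAt g g' x) :
    HasDerivAt (fun y => F (g y)) (c * g') x := by
  have h1 := (hF.hasFDerivAt.restrictScalars ℝ).comp_hasDerivAt x hg
  convert h1 using 1
  · rfl
  · rfl
  rw [ContinuousLinearMap.coe_restrictScalars', ContinuousLinearMap.toSpanSingleton_apply, smul_eq_mul]
  ring

lemma hasDerivAt_ofReal (x : ℝ) : HasDerivAt (fun σ : ℝ => (σ : ℂ)) 1 x := by
  simpa using (hasDerivAt_id x).ofReal_comp

set_option maxHeartbeats 2000000 in
/-- **Straight-line homotopy invariance of iterated integrals.** -/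
lemma straightline {U : Set ℂ} (hUopen : IsOpen U)
    {n : ℕ} {f : Fin n → ℂ → ℂ} (hf : ∀ i, DifferentiableOn ℂ (f i) U)
    (c₀ c₁ d₀ d₁ : ℝ → ℂ)
    (hc₀ : ContinuousOn c₀ (Icc 0 1)) (hc₁ : ContinuousOn c₁ (Icc 0 1))
    (hd₀ : Continuous d₀) (hd₁ : Continuous d₁)
    (hder₀ : ∀ t ∈ Ioo (0:ℝ) 1, HasDerivAt c₀ (d₀ t) t)
    (hder₁ : ∀ t ∈ Ioo (0:ℝ) 1, HasDerivAt c₁ (d₁ t) t)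
    (h00 : c₀ 0 = c₁ 0) (h11 : c₀ 1 = c₁ 1)
    (hseg : ∀ σ ∈ Icc (0:ℝ) 1, ∀ t ∈ Icc (0:ℝ) 1, c₀ t + (σ:ℂ) * (c₁ t - c₀ t) ∈ U) :
    iteratedPathIntegral n c₀ f = iteratedPathIntegral n c₁ f := by
  classical
  set K : ℝ → ℝ → ℂ := fun σ t => c₀ (cl t) + (cl σ : ℂ) * (c₁ (cl t) - c₀ (cl t)) with hKdef
  set v : ℝ → ℝ → ℂ := fun σ t => d₀ (cl t) + (cl σ : ℂ) * (d₁ (cl t) - d₀ (cl t)) with hvdef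
  set w : ℝ → ℂ := fun t => c₁ (cl t) - c₀ (cl t) with hwdef
  set fE : ℕ → ℂ → ℂ := fun i => if h : i < n then f ⟨i, h⟩ else 0 with hfEdef
  set G : ℕ → ℝ → ℝ → ℂ := fun i σ u => fE i (K σ u) * v σ u with hGdef
  set FF : ℕ → ℝ → ℝ → ℂ := fun k σ t => Frec (fun i => G i σ) k t with hFFdef
  set Vt : ℕ → ℝ → ℝ → ℂ :=
    fun k σ t => if k = 0 then 0 else G (k-1) σ t * FF (k-1) σ t with hVtdef
  set W : ℕ → ℝ → ℝ → ℂ :=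
    fun k σ t => if k = 0 then 0 else fE (k-1) (K σ t) * w t * FF (k-1) σ t with hWdef
  have hFFsucc : ∀ (k : ℕ) (σ t : ℝ),
      FF (k+1) σ t = ∫ u in (0:ℝ)..t, G k σ u * FF k σ u := fun k σ t => rfl
  have hslice : ∀ {F : ℝ × ℝ → ℂ}, Continuous F → ∀ σ, Continuous fun u => F (σ, u) :=
    fun hF σ => hF.comp (continuous_const.prodMk continuous_id)
  -- basic continuity facts
  have hccl₀ : Continuous fun t => c₀ (cl t) := hc₀.comp_continuous continuous_cl cl_mem
  have hccl₁ : Continuous fun t => c₁ (cl t) := hc₁.comp_continuous continuous_cl cl_mem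
  have hdcl₀ : Continuous fun t => d₀ (cl t) := hd₀.comp continuous_cl
  have hdcl₁ : Continuous fun t => d₁ (cl t) := hd₁.comp continuous_cl
  have hclR : Continuous fun σ : ℝ => (cl σ : ℂ) := Complex.continuous_ofReal.comp continuous_cl
  have hKcont : Continuous fun p : ℝ × ℝ => K p.1 p.2 := by
    apply Continuous.add (hccl₀.comp continuous_snd)
    exact (hclR.comp continuous_fst).mul
      ((hccl₁.comp continuous_snd).sub (hccl₀.comp continuous_snd))
  have hvcont : Continuous fun p : ℝ × ℝ => v p.1 p.2 := by
    apply Continuous.add (hdcl₀.comp continuous_snd)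
    exact (hclR.comp continuous_fst).mul
      ((hdcl₁.comp continuous_snd).sub (hdcl₀.comp continuous_snd))
  have hwcont : Continuous w := hccl₁.sub hccl₀
  have hKU : ∀ σ u, K σ u ∈ U := fun σ u => hseg (cl σ) (cl_mem σ) (cl u) (cl_mem u)
  have hfEd : ∀ i, DifferentiableOn ℂ (fE i) U := by
    intro i
    by_cases h : i < n
    · simp only [hfEdef, dif_pos h]; exact hf ⟨i, h⟩
    · simp only [hfEdef, dif_neg h]; exact differentiableOn_const 0
  have hfEc : ∀ i, ContinuousOn (fE i) U := fun i => (hfEd i).continuousOn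
  have hfE'c : ∀ i, ContinuousOn (deriv (fE i)) U :=
    fun i => (((hfEd i).analyticOnNhd hUopen).deriv).continuousOn
  have hGc : ∀ i, Continuous fun p : ℝ × ℝ => G i p.1 p.2 := by
    intro i
    exact ((hfEc i).comp_continuous hKcont fun p => hKU _ _).mul hvcont
  have hFFc : ∀ k, Continuous fun p : ℝ × ℝ => FF k p.1 p.2 := by
    intro k
    induction k with
    | zero => exact continuous_const
    | succ k ih =>
      have hint : Continuous (Function.uncurry fun σ u => G k σ u * FF k σ u) :=
        (hGc k).mul ih
      have := intervalIntegral.continuous_parametric_primitive_of_continuous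
        (μ := volume) (a₀ := (0:ℝ)) hint
      have h2 : (fun p : ℝ × ℝ => FF (k+1) p.1 p.2)
          = fun p : ℝ × ℝ => ∫ u in (0:ℝ)..p.2, G k p.1 u * FF k p.1 u :=
        funext fun p => hFFsucc k p.1 p.2
      rw [h2]
      exact this
  have hWcont : ∀ k, Continuous fun p : ℝ × ℝ => W k p.1 p.2 := by
    intro k
    cases k with
    | zero => simp only [hWdef, if_pos rfl]; exact continuous_const
    | succ j =>
      simp only [hWdef, Nat.succ_ne_zero, if_false, Nat.add_sub_cancel]
      exact (((hfEc j).comp_continuous hKcont fun p => hKU _ _).mul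
        (hwcont.comp continuous_snd)).mul (hFFc j)
  -- derivatives in t
  have hFt : ∀ k σ t, HasDerivAt (fun t => FF k σ t) (Vt k σ t) t := by
    intro k σ t
    cases k with
    | zero =>
      simp only [hVtdef, if_pos rfl]
      exact hasDerivAt_const t (1:ℂ)
    | succ j =>
      simp only [hVtdef, Nat.succ_ne_zero, if_false, Nat.add_sub_cancel]
      have hcont : Continuous fun u => G j σ u * FF j σ u :=
        (hslice (hGc j) σ).mul (hslice (hFFc j) σ)
      have := (hcont.integral_hasStrictDerivAt 0 t).hasDerivAt
      have h2 : (fun t => FF (j+1) σ t) = fun t => ∫ u in (0:ℝ)..t, G j σ u * FF j σ u :=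
        funext fun t => hFFsucc j σ t
      rw [h2]
      exact this
  -- derivatives in σ of building blocks
  have hKs : ∀ (u : ℝ), ∀ σ ∈ Ioo (0:ℝ) 1, HasDerivAt (fun σ => K σ u) (w u) σ := by
    intro u σ hσ
    have h1 : HasDerivAt (fun σ : ℝ => c₀ (cl u) + (σ:ℂ) * (c₁ (cl u) - c₀ (cl u))) (w u) σ := by
      have := ((hasDerivAt_ofReal σ).mul_const (c₁ (cl u) - c₀ (cl u))).const_add (c₀ (cl u))
      simpa [hwdef] using this
    apply h1.congr_of_eventuallyEq
    filter_upwards [cl_eventuallyEq hσ] with y hy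
    simp only [hKdef, hy]
  have hvs : ∀ (u : ℝ), ∀ σ ∈ Ioo (0:ℝ) 1,
      HasDerivAt (fun σ => v σ u) (d₁ (cl u) - d₀ (cl u)) σ := by
    intro u σ hσ
    have h1 : HasDerivAt (fun σ : ℝ => d₀ (cl u) + (σ:ℂ) * (d₁ (cl u) - d₀ (cl u)))
        (d₁ (cl u) - d₀ (cl u)) σ := by
      have := ((hasDerivAt_ofReal σ).mul_const (d₁ (cl u) - d₀ (cl u))).const_add (d₀ (cl u))
      simpa using this
    apply h1.congr_of_eventuallyEq
    filter_upwards [cl_eventuallyEq hσ] with y hy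
    simp only [hvdef, hy]
  have hKt : ∀ (σ : ℝ), ∀ u ∈ Ioo (0:ℝ) 1, HasDerivAt (fun u => K σ u) (v σ u) u := by
    intro σ u hu
    have hclu : cl u = u := cl_of_mem ⟨hu.1.le, hu.2.le⟩
    have h1 : HasDerivAt (fun u => c₀ u + (cl σ:ℂ) * (c₁ u - c₀ u))
        (d₀ u + (cl σ:ℂ) * (d₁ u - d₀ u)) u :=
      (hder₀ u hu).add (((hder₁ u hu).sub (hder₀ u hu)).const_mul _)
    have h2 : v σ u = d₀ u + (cl σ:ℂ) * (d₁ u - d₀ u) := by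
      simp only [hvdef, hclu]
    rw [h2]
    apply h1.congr_of_eventuallyEq
    filter_upwards [cl_eventuallyEq hu] with y hy
    simp only [hKdef, hy]
  have hwt : ∀ u ∈ Ioo (0:ℝ) 1, HasDerivAt w (d₁ u - d₀ u) u := by
    intro u hu
    have h1 : HasDerivAt (fun u => c₁ u - c₀ u) (d₁ u - d₀ u) u :=
      (hder₁ u hu).sub (hder₀ u hu)
    apply h1.congr_of_eventuallyEq
    filter_upwards [cl_eventuallyEq hu] with y hy
    simp only [hwdef, hy]
  have hw0 : w 0 = 0 := by
    simp only [hwdef, cl_zero, h00, sub_self]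
  have hw1 : w 1 = 0 := by
    simp only [hwdef, cl_one, h11, sub_self]
  have hWV : ∀ k σ u, w u * Vt k σ u = v σ u * W k σ u := by
    intro k σ u
    cases k with
    | zero => simp [hVtdef, hWdef]
    | succ j =>
      simp only [hVtdef, hWdef, hGdef, Nat.succ_ne_zero, if_false, Nat.add_sub_cancel]
      ring
  -- the key induction: σ-derivative of FF
  have hW : ∀ k, k ≤ n → ∀ σ ∈ Ioo (0:ℝ) 1, ∀ t ∈ Icc (0:ℝ) 1,
      HasDerivAt (fun σ => FF k σ t) (W k σ t) σ := by
    intro k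
    induction k with
    | zero =>
      intro _ σ hσ t ht
      simp only [hWdef, if_pos rfl]
      exact hasDerivAt_const σ (1:ℂ)
    | succ k ih =>
      intro hk σ₀ hσ₀ t ht
      have hkn : k < n := lt_of_lt_of_le (Nat.lt_succ_self k) hk
      set Λ : ℝ → ℝ → ℂ := fun σ u =>
        (deriv (fE k) (K σ u) * w u * v σ u + fE k (K σ u) * (d₁ (cl u) - d₀ (cl u))) * FF k σ u
        + fE k (K σ u) * v σ u * W k σ u with hΛdef
      have hΛcont : Continuous fun p : ℝ × ℝ => Λ p.1 p.2 := by
        have hdf : Continuous fun p : ℝ × ℝ => deriv (fE k) (K p.1 p.2) :=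
          (hfE'c k).comp_continuous hKcont fun p => hKU _ _
        have hfk : Continuous fun p : ℝ × ℝ => fE k (K p.1 p.2) :=
          (hfEc k).comp_continuous hKcont fun p => hKU _ _
        apply Continuous.add
        · exact (((hdf.mul (hwcont.comp continuous_snd)).mul hvcont).add
            (hfk.mul ((hdcl₁.comp continuous_snd).sub (hdcl₀.comp continuous_snd)))).mul (hFFc k)
        · exact (hfk.mul hvcont).mul (hWcont k)
      set ε : ℝ := (min σ₀ (1 - σ₀)) / 2 with hεdef
      have hεpos : 0 < ε := by
        have h1 : 0 < min σ₀ (1 - σ₀) := lt_min hσ₀.1 (by linarith [hσ₀.2])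
        positivity
      have hball : Metric.ball σ₀ ε ⊆ Ioo (0:ℝ) 1 := by
        intro x hx
        rw [Metric.mem_ball, Real.dist_eq, abs_lt] at hx
        have h1 := min_le_left σ₀ (1 - σ₀)
        have h2 := min_le_right σ₀ (1 - σ₀)
        constructor <;> [linarith [hσ₀.1]; linarith [hσ₀.2]]
      obtain ⟨C, hC⟩ := (IsCompact.prod (isCompact_Icc (a := σ₀ - ε) (b := σ₀ + ε))
        (isCompact_Icc (a := (0:ℝ)) (b := 1))).exists_bound_of_continuousOn
        hΛcont.continuousOn
      have h0t : (0:ℝ) ≤ t := ht.1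
      have hFmeas : ∀ᶠ x in nhds σ₀, AEStronglyMeasurable (fun u => G k x u * FF k x u)
          (volume.restrict (Set.uIoc 0 t)) :=
        Filter.Eventually.of_forall fun x =>
          (((hslice (hGc k) x).mul (hslice (hFFc k) x)).aestronglyMeasurable).restrict
      have hFint : IntervalIntegrable (fun u => G k σ₀ u * FF k σ₀ u) volume 0 t :=
        ((hslice (hGc k) σ₀).mul (hslice (hFFc k) σ₀)).intervalIntegrable 0 t
      have hF'meas : AEStronglyMeasurable (Λ σ₀) (volume.restrict (Set.uIoc 0 t)) :=
        (hslice hΛcont σ₀).aestronglyMeasurable.restrict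
      have hbound : ∀ᵐ u ∂volume, u ∈ Set.uIoc 0 t →
          ∀ x ∈ Metric.ball σ₀ ε, ‖Λ x u‖ ≤ C := by
        apply Filter.Eventually.of_forall
        intro u hu x hx
        have hu1 : u ∈ Icc (0:ℝ) 1 := by
          rw [Set.uIoc_of_le h0t] at hu
          exact ⟨hu.1.le, le_trans hu.2 ht.2⟩
        have hx1 : x ∈ Icc (σ₀ - ε) (σ₀ + ε) := by
          rw [Metric.mem_ball, Real.dist_eq, abs_lt] at hx
          constructor <;> linarith [hx.1, hx.2]
        simpa using hC (x, u) ⟨hx1, hu1⟩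
      have hbint : IntervalIntegrable (fun _ : ℝ => C) volume 0 t := intervalIntegrable_const
      have hdiff : ∀ᵐ u ∂volume, u ∈ Set.uIoc 0 t →
          ∀ x ∈ Metric.ball σ₀ ε, HasDerivAt (fun σ => G k σ u * FF k σ u) (Λ x u) x := by
        apply Filter.Eventually.of_forall
        intro u hu x hx
        have hu1 : u ∈ Icc (0:ℝ) 1 := by
          rw [Set.uIoc_of_le h0t] at hu
          exact ⟨hu.1.le, le_trans hu.2 ht.2⟩
        have hx' : x ∈ Ioo (0:ℝ) 1 := hball hx
        have hKx := hKs u x hx'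
        have hvx := hvs u x hx'
        have hfEder : HasDerivAt (fE k) (deriv (fE k) (K x u)) (K x u) :=
          ((hfEd k).differentiableAt (hUopen.mem_nhds (hKU x u))).hasDerivAt
        have hcomp := hasDerivAt_comp_real (g := fun σ => K σ u) hfEder hKx
        have hFFx := ih hkn.le x hx' u hu1
        have htotal := (hcomp.mul hvx).mul hFFx
        exact htotal
      have hmain := (intervalIntegral.hasDerivAt_integral_of_dominated_loc_of_deriv_le
        (F := fun σ u => G k σ u * FF k σ u) (F' := Λ) (x₀ := σ₀) (a := 0) (b := t)
        (bound := fun _ => C) (Metric.ball_mem_nhds σ₀ hεpos) hFmeas hFint hF'meas hbound hbint hdiff).2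
      have hFTC : (∫ u in (0:ℝ)..t, Λ σ₀ u) = W (k+1) σ₀ t := by
        have hRcont : ContinuousOn (fun u => fE k (K σ₀ u) * w u * FF k σ₀ u) (Icc 0 t) := by
          apply Continuous.continuousOn
          exact ((((hfEc k).comp_continuous (hslice hKcont σ₀) fun u => hKU _ _)).mul
            hwcont).mul (hslice (hFFc k) σ₀)
        have hder : ∀ u ∈ Ioo (0:ℝ) t,
            HasDerivAt (fun u => fE k (K σ₀ u) * w u * FF k σ₀ u) (Λ σ₀ u) u := by
          intro u hu
          have hu' : u ∈ Ioo (0:ℝ) 1 := ⟨hu.1, lt_of_lt_of_le hu.2 ht.2⟩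
          have hclu : cl u = u := cl_of_mem ⟨hu'.1.le, hu'.2.le⟩
          have hKu := hKt σ₀ u hu'
          have hfEder : HasDerivAt (fE k) (deriv (fE k) (K σ₀ u)) (K σ₀ u) :=
            ((hfEd k).differentiableAt (hUopen.mem_nhds (hKU σ₀ u))).hasDerivAt
          have hcomp := hasDerivAt_comp_real hfEder hKu
          have hwu := hwt u hu'
          have hFFu := hFt k σ₀ u
          have htotal := (hcomp.mul hwu).mul hFFu
          have heq : deriv (fE k) (K σ₀ u) * v σ₀ u * w u * FF k σ₀ u
              + fE k (K σ₀ u) * (d₁ u - d₀ u) * FF k σ₀ u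
              + fE k (K σ₀ u) * w u * Vt k σ₀ u = Λ σ₀ u := by
            have hwv := hWV k σ₀ u
            simp only [hΛdef, hclu]
            linear_combination (fE k (K σ₀ u)) * hwv
          rw [← heq]
          convert htotal using 1
          · rfl
          · rfl
          simp only [Pi.mul_apply]
          ring
        have hΛint : IntervalIntegrable (Λ σ₀) volume 0 t :=
          (hslice hΛcont σ₀).intervalIntegrable 0 t
        rw [intervalIntegral.integral_eq_sub_of_hasDerivAt_of_le h0t hRcont hder hΛint]
        have hR0 : fE k (K σ₀ 0) * w 0 * FF k σ₀ 0 = 0 := by rw [hw0]; ring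
        rw [hR0, sub_zero]
        simp only [hWdef, Nat.succ_ne_zero, if_false, Nat.add_sub_cancel]
      have hfun : (fun σ => FF (k+1) σ t)
          = fun σ => ∫ u in (0:ℝ)..t, G k σ u * FF k σ u :=
        funext fun σ => hFFsucc k σ t
      rw [hfun, show W (k+1) σ₀ t = ∫ u in (0:ℝ)..t, Λ σ₀ u from hFTC.symm]
      exact hmain
  -- constancy in σ
  have hφc : Continuous fun σ => FF n σ 1 :=
    (hFFc n).comp (continuous_id.prodMk continuous_const)
  have hφd : ∀ σ ∈ Ioo (0:ℝ) 1, HasDerivAt (fun σ => FF n σ 1) 0 σ := by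
    intro σ hσ
    have h := hW n le_rfl σ hσ 1 ⟨zero_le_one, le_refl 1⟩
    have hzero : W n σ 1 = 0 := by
      cases n with
      | zero => simp [hWdef]
      | succ m => simp [hWdef, hw1]
    rwa [hzero] at h
  have hconst : FF n 0 1 = FF n 1 1 := by
    have h := intervalIntegral.integral_eq_sub_of_hasDerivAt_of_le
      (f := fun σ => FF n σ 1) (f' := fun _ => (0:ℂ)) zero_le_one hφc.continuousOn
      (fun σ hσ => hφd σ hσ) intervalIntegrable_const
    simp only [intervalIntegral.integral_zero] at h
    exact (sub_eq_zero.1 h.symm).symm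
  -- identify the endpoints
  have e0 : iteratedPathIntegral n c₀ f = FF n 0 1 := by
    apply ipi_eq c₀ f (fun i => G i 0) (fun i => hslice (hGc i) 0)
    intro t ht i
    have hclt : cl t = t := cl_of_mem ⟨ht.1.le, ht.2.le⟩
    have hG0 : G (i:ℕ) 0 t = f i (c₀ t) * d₀ t := by
      simp only [hGdef, hKdef, hvdef, hfEdef, cl_zero, hclt, Complex.ofReal_zero, zero_mul,
        add_zero, i.isLt, dif_pos, Fin.eta]
    rw [hG0, (hder₀ t ht).deriv]
  have e1 : iteratedPathIntegral n c₁ f = FF n 1 1 := by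
    apply ipi_eq c₁ f (fun i => G i 1) (fun i => hslice (hGc i) 1)
    intro t ht i
    have hclt : cl t = t := cl_of_mem ⟨ht.1.le, ht.2.le⟩
    have hK1 : K 1 t = c₁ t := by
      simp only [hKdef, cl_one, hclt, Complex.ofReal_one, one_mul]
      ring
    have hv1 : v 1 t = d₁ t := by
      simp only [hvdef, cl_one, hclt, Complex.ofReal_one, one_mul]
      ring
    have hG1 : G (i:ℕ) 1 t = f i (c₁ t) * d₁ t := by
      simp only [hGdef, hK1, hv1, hfEdef, i.isLt, dif_pos, Fin.eta]
    rw [hG1, (hder₁ t ht).deriv]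
  rw [e0, e1, hconst]

end IterHomotopyAux

theorem iteratedPathIntegral_homotopy_invariant
    (U : Set ℂ) (hUopen : IsOpen U) (hUsc : SimplyConnectedSpace U)
    (n : ℕ) (f : Fin n → ℂ → ℂ) (hf : ∀ i, DifferentiableOn ℂ (f i) U)
    (H : ℝ × ℝ → ℂ) (hH : ContDiffOn ℝ 1 H (Set.Icc 0 1 ×ˢ Set.Icc 0 1))
    (hHU : ∀ x ∈ Set.Icc (0 : ℝ) 1 ×ˢ Set.Icc (0 : ℝ) 1, H x ∈ U)
    (p q : ℂ)
    (hH0 : ∀ s ∈ Set.Icc (0 : ℝ) 1, H (s, 0) = p)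
    (hH1 : ∀ s ∈ Set.Icc (0 : ℝ) 1, H (s, 1) = q) :
    ∀ s₁ ∈ Set.Icc (0 : ℝ) 1, ∀ s₂ ∈ Set.Icc (0 : ℝ) 1,
      iteratedPathIntegral n (fun t => H (s₁, t)) f =
        iteratedPathIntegral n (fun t => H (s₂, t)) f := by
  classical
  intro s₁ hs₁ s₂ hs₂
  open IterHomotopyAux in
  set Q : Set (ℝ × ℝ) := Set.Icc 0 1 ×ˢ Set.Icc 0 1 with hQdef
  have hQcomp : IsCompact Q := isCompact_Icc.prod isCompact_Icc
  have hHcont : ContinuousOn H Q := hH.continuousOn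
  have himg : IsCompact (H '' Q) := hQcomp.image_of_continuousOn hHcont
  have hsub : H '' Q ⊆ U := by
    rintro z ⟨x, hx, rfl⟩
    exact hHU x hx
  obtain ⟨r, hr, hthick⟩ := himg.exists_thickening_subset_open hUopen hsub
  have hunif := hQcomp.uniformContinuousOn_of_continuous hHcont
  rw [Metric.uniformContinuousOn_iff] at hunif
  obtain ⟨δ, hδ, hδ'⟩ := hunif r hr
  -- the t-derivative of the homotopy
  set D : ℝ × ℝ → ℂ := fun x => (fderivWithin ℝ H Q x) ((0:ℝ), (1:ℝ)) with hDdef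
  have hQuniq : UniqueDiffOn ℝ Q :=
    (uniqueDiffOn_Icc zero_lt_one).prod (uniqueDiffOn_Icc zero_lt_one)
  have hDcont : ContinuousOn D Q := by
    have h1 := hH.continuousOn_fderivWithin hQuniq le_rfl
    exact (ContinuousLinearMap.apply ℝ ℂ (((0:ℝ), (1:ℝ)) : ℝ × ℝ)).continuous.comp_continuousOn h1
  set d : ℝ → ℝ → ℂ := fun s t => D (s, IterHomotopyAux.cl t) with hddef
  have hdcont : ∀ s ∈ Set.Icc (0:ℝ) 1, Continuous (d s) := by
    intro s hs
    exact hDcont.comp_continuous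
      (continuous_const.prodMk IterHomotopyAux.continuous_cl)
      (fun t => ⟨hs, IterHomotopyAux.cl_mem t⟩)
  have hγcont : ∀ s ∈ Set.Icc (0:ℝ) 1,
      ContinuousOn (fun t => H (s, t)) (Set.Icc 0 1) := by
    intro s hs
    exact hHcont.comp (continuous_const.prodMk continuous_id).continuousOn
      (fun t ht => ⟨hs, ht⟩)
  have hγder : ∀ s ∈ Set.Icc (0:ℝ) 1, ∀ t ∈ Set.Ioo (0:ℝ) 1,
      HasDerivAt (fun t => H (s, t)) (d s t) t := by
    intro s hs t ht
    have hmem : (s, t) ∈ Q := ⟨hs, ⟨ht.1.le, ht.2.le⟩⟩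
    have hdw : DifferentiableWithinAt ℝ H Q (s, t) := (hH.differentiableOn one_ne_zero) (s, t) hmem
    have hfd := hdw.hasFDerivWithinAt
    have hL : HasDerivWithinAt (fun τ : ℝ => (s, τ)) (((0:ℝ), (1:ℝ)) : ℝ × ℝ)
        (Set.Ioo 0 1) t :=
      ((hasDerivAt_const t s).prodMk (hasDerivAt_id t)).hasDerivWithinAt
    have hcomp := hfd.comp_hasDerivWithinAt t hL
      (fun τ hτ => ⟨hs, ⟨hτ.1.le, hτ.2.le⟩⟩)
    have h2 := hcomp.hasDerivAt (Ioo_mem_nhds ht.1 ht.2)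
    have h3 : d s t = (fderivWithin ℝ H Q (s, t)) ((0:ℝ), (1:ℝ)) := by
      simp only [hddef, hDdef, IterHomotopyAux.cl_of_mem ⟨ht.1.le, ht.2.le⟩]
    rw [h3]
    exact h2
  -- one small step
  have key : ∀ s₀ ∈ Set.Icc (0:ℝ) 1, ∀ s ∈ Set.Icc (0:ℝ) 1, |s - s₀| < δ →
      iteratedPathIntegral n (fun t => H (s₀, t)) f =
        iteratedPathIntegral n (fun t => H (s, t)) f := by
    intro s₀ hs₀ s hs hclose
    apply IterHomotopyAux.straightline hUopen hf _ _ _ _ (hγcont s₀ hs₀) (hγcont s hs)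
      (hdcont s₀ hs₀) (hdcont s hs) (hγder s₀ hs₀) (hγder s hs)
    · rw [hH0 s₀ hs₀, hH0 s hs]
    · rw [hH1 s₀ hs₀, hH1 s hs]
    · intro σ hσ t ht
      apply hthick
      rw [Metric.mem_thickening_iff]
      refine ⟨H (s₀, t), ⟨(s₀, t), ⟨hs₀, ht⟩, rfl⟩, ?_⟩
      have hclose2 : dist (H (s, t)) (H (s₀, t)) < r := by
        apply hδ' (s, t) ⟨hs, ht⟩ (s₀, t) ⟨hs₀, ht⟩
        rw [Prod.dist_eq]
        simpa [Real.dist_eq] using hclose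
      calc dist (H (s₀, t) + (σ:ℂ) * (H (s, t) - H (s₀, t))) (H (s₀, t))
          = ‖(σ:ℂ) * (H (s, t) - H (s₀, t))‖ := by
            rw [dist_eq_norm]; ring_nf
        _ = σ * ‖H (s, t) - H (s₀, t)‖ := by
            rw [norm_mul, Complex.norm_real, Real.norm_eq_abs, abs_of_nonneg hσ.1]
        _ ≤ 1 * ‖H (s, t) - H (s₀, t)‖ :=
            mul_le_mul_of_nonneg_right hσ.2 (norm_nonneg _)
        _ = dist (H (s, t)) (H (s₀, t)) := by rw [one_mul, dist_eq_norm]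
        _ < r := hclose2
  -- chain between s₁ and s₂
  obtain ⟨N, hN⟩ := exists_nat_gt (|s₂ - s₁| / δ)
  have hNpos : 0 < (N:ℝ) := lt_of_le_of_lt (div_nonneg (abs_nonneg _) hδ.le) hN
  set x : ℕ → ℝ := fun j => s₁ + ((j:ℝ)/(N:ℝ)) * (s₂ - s₁) with hxdef
  have hxmem : ∀ j : ℕ, j ≤ N → x j ∈ Set.Icc (0:ℝ) 1 := by
    intro j hj
    have hθ1 : (0:ℝ) ≤ (j:ℝ)/(N:ℝ) := div_nonneg (Nat.cast_nonneg j) hNpos.le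
    have hθ2 : (j:ℝ)/(N:ℝ) ≤ 1 := by
      rw [div_le_one hNpos]
      exact_mod_cast hj
    set θ : ℝ := (j:ℝ)/(N:ℝ)
    have hxe : x j = (1 - θ) * s₁ + θ * s₂ := by rw [hxdef]; ring
    constructor
    · rw [hxe]
      have h1 : 0 ≤ (1 - θ) * s₁ := mul_nonneg (by linarith) hs₁.1
      have h2 : 0 ≤ θ * s₂ := mul_nonneg hθ1 hs₂.1
      linarith
    · rw [hxe]
      have h1 : (1 - θ) * s₁ ≤ (1 - θ) * 1 := mul_le_mul_of_nonneg_left hs₁.2 (by linarith)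
      have h2 : θ * s₂ ≤ θ * 1 := mul_le_mul_of_nonneg_left hs₂.2 hθ1
      linarith
  have hstep : ∀ j : ℕ, |x (j+1) - x j| < δ := by
    intro j
    have hne : (N:ℝ) ≠ 0 := hNpos.ne'
    have hdiff : x (j+1) - x j = (s₂ - s₁)/(N:ℝ) := by
      rw [hxdef]
      push_cast
      field_simp
      ring
    rw [hdiff, abs_div, abs_of_pos hNpos, div_lt_iff₀ hNpos]
    have := (div_lt_iff₀ hδ).1 hN
    linarith [this]
  have hchain : ∀ j : ℕ, j ≤ N →
      iteratedPathIntegral n (fun t => H (s₁, t)) f =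
        iteratedPathIntegral n (fun t => H (x j, t)) f := by
    intro j
    induction j with
    | zero =>
      intro _
      have : x 0 = s₁ := by simp [hxdef]
      rw [this]
    | succ j ih =>
      intro hj
      have hj' : j ≤ N := le_trans (Nat.le_succ j) hj
      rw [ih hj']
      exact key (x j) (hxmem j hj') (x (j+1)) (hxmem (j+1) hj) (hstep j)
  have hxN : x N = s₂ := by
    rw [hxdef]
    field_simp
    ring
  have := hchain N (le_refl N)
  rwa [hxN] at this
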